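/- Let 𝐰, 𝐰' ∈ D* be words of equal length in the digit set of a Barański sponge and let u, u' ∈ D. If π(𝐰u) − π(𝐰'u') = π(𝐰) − π(𝐰') and this vector is a nonzero vector with all coordinates in {−1,0,1}, then ψ_𝐰(K) ∩ ψ_{𝐰'}(K) ≠ ∅, where K is the Barański sponge. -/
import Mathlib


open Set

noncomputable def psiB {d : ℕ} (p : Fin d → ℕ → ℝ) (w : Fin d → ℕ)
    (x : Fin d → ℝ) : Fin d → ℝ :=
  fun i => p i (w i) * x i + ∑ l ∈ Finset.Ico 1 (w i), p i l

noncomputable def psiBW {d : ℕ} (p : Fin d → ℕ → ℝ) (l : List (Fin d → ℕ)) :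
    (Fin d → ℝ) → (Fin d → ℝ) :=
  l.foldr (fun w g => psiB p w ∘ g) id

def piB {d : ℕ} (Nv : Fin d → ℕ) (l : List (Fin d → ℕ)) (i : Fin d) : ℤ :=
  l.foldl (fun acc w => (Nv i : ℤ) * acc + (w i : ℤ)) 0

def BWords {d : ℕ} (D : Finset (Fin d → ℕ)) (k : ℕ) : Set (List (Fin d → ℕ)) :=
  {l | l.length = k ∧ ∀ w ∈ l, w ∈ D}

def BSetup (d : ℕ) (Nv : Fin d → ℕ) (p : Fin d → ℕ → ℝ)
    (D : Finset (Fin d → ℕ)) : Prop :=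
  2 ≤ d ∧ (∀ i, 2 ≤ Nv i) ∧ (∀ i j, 1 ≤ j → j ≤ Nv i → 0 < p i j) ∧
    (∀ i, ∑ j ∈ Finset.Icc 1 (Nv i), p i j = 1) ∧
    (∀ w ∈ D, ∀ i, 1 ≤ w i ∧ w i ≤ Nv i) ∧ 1 < D.card ∧ D.card < ∏ i, Nv i

def IsBAttractor {d : ℕ} (p : Fin d → ℕ → ℝ) (D : Finset (Fin d → ℕ))
    (K : Set (Fin d → ℝ)) : Prop :=
  K.Nonempty ∧ IsCompact K ∧ K = ⋃ w ∈ D, psiB p w '' K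

def Q0B (d : ℕ) : Set (Fin d → ℝ) := Set.univ.pi fun _ => Set.Icc (0 : ℝ) 1



namespace S17

def sval (N : ℕ) (l : List ℕ) : ℤ := l.foldl (fun (acc : ℤ) (j : ℕ) => (N:ℤ) * acc + (j:ℤ)) 0

noncomputable def soff (P : ℕ → ℝ) (l : List ℕ) : ℝ :=
  l.foldr (fun j o => (∑ m ∈ Finset.Ico 1 j, P m) + P j * o) 0

noncomputable def srate (P : ℕ → ℝ) (l : List ℕ) : ℝ := (l.map P).prod

@[simp] lemma sval_nil (N : ℕ) : sval N [] = 0 := rfl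

lemma foldl_shift (N : ℕ) (l : List ℕ) : ∀ init : ℤ,
    l.foldl (fun (acc : ℤ) (j : ℕ) => (N:ℤ) * acc + (j:ℤ)) init
      = init * (N:ℤ) ^ l.length + sval N l := by
  induction l with
  | nil => intro init; simp [sval]
  | cons j l ih =>
    intro init
    rw [List.foldl_cons]
    rw [ih ((N:ℤ) * init + j)]
    have h2 : sval N (j :: l) = l.foldl (fun (acc : ℤ) (j : ℕ) => (N:ℤ) * acc + (j:ℤ)) ((N:ℤ) * 0 + j) := by
      simp [sval]
    rw [h2, ih ((N:ℤ) * 0 + (j:ℤ))]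
    simp [List.length_cons, pow_succ]
    ring

lemma sval_cons (N : ℕ) (j : ℕ) (l : List ℕ) :
    sval N (j :: l) = (j : ℤ) * (N:ℤ) ^ l.length + sval N l := by
  have h2 : sval N (j :: l) = l.foldl (fun (acc : ℤ) (j : ℕ) => (N:ℤ) * acc + (j:ℤ)) ((N:ℤ) * 0 + j) := by
    simp [sval]
  rw [h2, foldl_shift]; ring

@[simp] lemma soff_nil (P : ℕ → ℝ) : soff P [] = 0 := rfl
@[simp] lemma srate_nil (P : ℕ → ℝ) : srate P [] = 1 := rfl

lemma soff_cons (P : ℕ → ℝ) (j : ℕ) (l : List ℕ) :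
    soff P (j :: l) = (∑ m ∈ Finset.Ico 1 j, P m) + P j * soff P l := rfl

lemma srate_cons (P : ℕ → ℝ) (j : ℕ) (l : List ℕ) :
    srate P (j :: l) = P j * srate P l := by simp [srate]

lemma srate_replicate (P : ℕ → ℝ) (n j : ℕ) :
    srate P (List.replicate n j) = (P j) ^ n := by simp [srate]

lemma soff_replicate_one (P : ℕ → ℝ) (n : ℕ) :
    soff P (List.replicate n 1) = 0 := by
  induction n with
  | zero => simp
  | succ n ih => rw [List.replicate_succ, soff_cons, ih]; simp

lemma soff_replicate_top (N : ℕ) (hN : 1 ≤ N) (P : ℕ → ℝ)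
    (hsum : ∑ j ∈ Finset.Icc 1 N, P j = 1) (n : ℕ) :
    soff P (List.replicate n N) = 1 - (P N) ^ n := by
  have hq : (∑ m ∈ Finset.Ico 1 N, P m) + P N = 1 := by
    rw [← hsum, ← Finset.Ico_add_one_right_eq_Icc, Finset.sum_Ico_succ_top hN]
  induction n with
  | zero => simp
  | succ n ih =>
    rw [List.replicate_succ, soff_cons, ih]
    rw [pow_succ]
    nlinarith [hq]

lemma sval_bounds (N : ℕ) (l : List ℕ) (hd : ∀ j ∈ l, 1 ≤ j ∧ j ≤ N) :
    sval N (List.replicate l.length 1) ≤ sval N l ∧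
      sval N l ≤ sval N (List.replicate l.length N) := by
  induction l with
  | nil => simp
  | cons j l ih =>
    have hj := hd j (by simp)
    have hN : 1 ≤ N := le_trans hj.1 hj.2
    obtain ⟨ih1, ih2⟩ := ih (fun x hx => hd x (by simp [hx]))
    have hpow : (0:ℤ) ≤ (N:ℤ) ^ l.length := by positivity
    have h1j : (1:ℤ) ≤ (j:ℤ) := by exact_mod_cast hj.1
    have hjN : (j:ℤ) ≤ (N:ℤ) := by exact_mod_cast hj.2
    have e1 : (1:ℤ) * (N:ℤ) ^ l.length ≤ (j:ℤ) * (N:ℤ) ^ l.length :=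
      mul_le_mul_of_nonneg_right h1j hpow
    have e2 : (j:ℤ) * (N:ℤ) ^ l.length ≤ (N:ℤ) * (N:ℤ) ^ l.length :=
      mul_le_mul_of_nonneg_right hjN hpow
    constructor
    · rw [List.length_cons, List.replicate_succ, sval_cons, sval_cons,
        List.length_replicate]
      push_cast
      push_cast at e1
      linarith
    · rw [List.length_cons, List.replicate_succ, sval_cons, sval_cons,
        List.length_replicate]
      linarith

lemma sval_gap (N : ℕ) (m : ℕ) :
    sval N (List.replicate m N) - sval N (List.replicate m 1) = (N:ℤ) ^ m - 1 := by
  induction m with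
  | zero => simp
  | succ m ih =>
    rw [List.replicate_succ, List.replicate_succ, sval_cons, sval_cons,
      List.length_replicate, List.length_replicate, pow_succ]
    push_cast
    push_cast at ih
    nlinarith [ih]

lemma sval_min_eq (N : ℕ) : ∀ (l : List ℕ), (∀ j ∈ l, 1 ≤ j ∧ j ≤ N) →
    sval N l = sval N (List.replicate l.length 1) → l = List.replicate l.length 1 := by
  intro l
  induction l with
  | nil => simp
  | cons j l ih =>
    intro hd hv
    have hj := hd j (by simp)
    have hb := (sval_bounds N l (fun x hx => hd x (by simp [hx]))).1
    rw [List.length_cons, List.replicate_succ, sval_cons, sval_cons,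
      List.length_replicate] at hv
    have hpow : (0:ℤ) < (N:ℤ) ^ l.length := by
      have : (0:ℤ) < (N:ℤ) := by exact_mod_cast lt_of_lt_of_le one_pos (le_trans hj.1 hj.2)
      positivity
    have hj1 : (1:ℤ) ≤ (j:ℤ) := by exact_mod_cast hj.1
    have hje : (j:ℤ) = 1 := by
      by_contra h
      have h2 : (2:ℤ) ≤ (j:ℤ) := by omega
      have := mul_le_mul_of_nonneg_right h2 hpow.le
      push_cast at hv
      linarith
    have hv' : sval N l = sval N (List.replicate l.length 1) := by
      push_cast at hv
      rw [hje] at hv; linarith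
    have hj' : j = 1 := by exact_mod_cast hje
    rw [List.length_cons, List.replicate_succ, hj',
      ih (fun x hx => hd x (by simp [hx])) hv']
    simp

lemma sval_max_eq (N : ℕ) : ∀ (l : List ℕ), (∀ j ∈ l, 1 ≤ j ∧ j ≤ N) →
    sval N l = sval N (List.replicate l.length N) → l = List.replicate l.length N := by
  intro l
  induction l with
  | nil => simp
  | cons j l ih =>
    intro hd hv
    have hj := hd j (by simp)
    have hb := (sval_bounds N l (fun x hx => hd x (by simp [hx]))).2
    rw [List.length_cons, List.replicate_succ, sval_cons, sval_cons,
      List.length_replicate] at hv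
    have hpow : (0:ℤ) < (N:ℤ) ^ l.length := by
      have : (0:ℤ) < (N:ℤ) := by exact_mod_cast lt_of_lt_of_le one_pos (le_trans hj.1 hj.2)
      positivity
    have hjN : (j:ℤ) ≤ (N:ℤ) := by exact_mod_cast hj.2
    have hje : (j:ℤ) = (N:ℤ) := by
      by_contra h
      have h2 : (j:ℤ) ≤ (N:ℤ) - 1 := by omega
      have := mul_le_mul_of_nonneg_right h2 hpow.le
      nlinarith
    have hv' : sval N l = sval N (List.replicate l.length N) := by
      rw [hje] at hv; linarith
    have hj' : j = N := by exact_mod_cast hje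
    rw [List.length_cons, List.replicate_succ, hj',
      ih (fun x hx => hd x (by simp [hx])) hv']
    simp

lemma sval_inj (N : ℕ) : ∀ (a b : List ℕ), a.length = b.length →
    (∀ j ∈ a, 1 ≤ j ∧ j ≤ N) → (∀ j ∈ b, 1 ≤ j ∧ j ≤ N) →
    sval N a = sval N b → a = b := by
  intro a
  induction a with
  | nil =>
    intro b hlen _ _ _
    exact (List.length_eq_zero_iff.mp hlen.symm).symm
  | cons j a ih =>
    intro b hlen hda hdb hv
    match b with
    | [] => simp at hlen
    | j' :: b =>
      have hm : a.length = b.length := by simpa using hlen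
      have hja := hda j (by simp)
      have hN1 : 1 ≤ N := le_trans hja.1 hja.2
      have hda' : ∀ x ∈ a, 1 ≤ x ∧ x ≤ N := fun x hx => hda x (by simp [hx])
      have hdb' : ∀ x ∈ b, 1 ≤ x ∧ x ≤ N := fun x hx => hdb x (by simp [hx])
      have hba := sval_bounds N a hda'
      have hbb := sval_bounds N b hdb'
      have hgap := sval_gap N b.length
      rw [sval_cons, sval_cons, hm] at hv
      have hpow : (0:ℤ) < (N:ℤ) ^ b.length := by
        have : (0:ℤ) < (N:ℤ) := by exact_mod_cast hN1
        positivity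
      rw [hm] at hba
      have hje : (j:ℤ) = (j':ℤ) := by
        rcases lt_trichotomy (j:ℤ) (j':ℤ) with h | h | h
        · exfalso
          have h2 : (j:ℤ) + 1 ≤ (j':ℤ) := by omega
          have := mul_le_mul_of_nonneg_right h2 hpow.le
          nlinarith
        · exact h
        · exfalso
          have h2 : (j':ℤ) + 1 ≤ (j:ℤ) := by omega
          have := mul_le_mul_of_nonneg_right h2 hpow.le
          nlinarith
      have hj' : j = j' := by exact_mod_cast hje
      have hva : sval N a = sval N b := by
        rw [hje] at hv; linarith
      rw [hj', ih b hm hda' hdb' hva]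

lemma srate_pos (N : ℕ) (P : ℕ → ℝ)
    (hpos : ∀ j, 1 ≤ j → j ≤ N → 0 < P j) (l : List ℕ)
    (hd : ∀ j ∈ l, 1 ≤ j ∧ j ≤ N) : 0 < srate P l := by
  induction l with
  | nil => simp
  | cons j l ih =>
    rw [srate_cons]
    have hj := hd j (by simp)
    exact mul_pos (hpos j hj.1 hj.2) (ih (fun x hx => hd x (by simp [hx])))

lemma adj (N : ℕ) (hN : 2 ≤ N) (P : ℕ → ℝ)
    (hpos : ∀ j, 1 ≤ j → j ≤ N → 0 < P j)
    (hsum : ∑ j ∈ Finset.Icc 1 N, P j = 1) :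
    ∀ (a b : List ℕ), a.length = b.length →
    (∀ j ∈ a, 1 ≤ j ∧ j ≤ N) → (∀ j ∈ b, 1 ≤ j ∧ j ≤ N) →
    sval N a = sval N b + 1 → soff P b + srate P b = soff P a := by
  have hq : ∀ m : ℕ, 1 ≤ m → m ≤ N →
      (∑ x ∈ Finset.Ico 1 m, P x) + P m = ∑ x ∈ Finset.Ico 1 (m+1), P x := by
    intro m hm1 hm2
    rw [Finset.sum_Ico_succ_top hm1]
  have hqN : (∑ x ∈ Finset.Ico 1 N, P x) + P N = 1 := by
    rw [← hsum, ← Finset.Ico_add_one_right_eq_Icc, Finset.sum_Ico_succ_top (le_trans one_le_two hN)]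
  intro a
  induction a with
  | nil =>
    intro b hlen _ _ hv
    have : b = [] := List.length_eq_zero_iff.mp hlen.symm
    subst this; simp at hv
  | cons j a ih =>
    intro b hlen hda hdb hv
    match b with
    | [] => simp at hlen
    | j' :: b =>
      have hm : a.length = b.length := by simpa using hlen
      have hda' : ∀ x ∈ a, 1 ≤ x ∧ x ≤ N := fun x hx => hda x (by simp [hx])
      have hdb' : ∀ x ∈ b, 1 ≤ x ∧ x ≤ N := fun x hx => hdb x (by simp [hx])
      have hja := hda j (by simp)
      have hjb := hdb j' (by simp)
      have hba := sval_bounds N a hda'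
      have hbb := sval_bounds N b hdb'
      have hgap := sval_gap N b.length
      rw [sval_cons, sval_cons, hm] at hv
      have hpow : (0:ℤ) < (N:ℤ) ^ b.length := by
        have : (0:ℤ) < (N:ℤ) := by positivity
        positivity
      rw [hm] at hba
      -- j = j' or j = j' + 1
      have hcase : (j:ℤ) = (j':ℤ) ∨ (j:ℤ) = (j':ℤ) + 1 := by
        rcases lt_trichotomy (j:ℤ) (j':ℤ) with h | h | h
        · exfalso
          have h2 : (j:ℤ) + 1 ≤ (j':ℤ) := by omega
          have := mul_le_mul_of_nonneg_right h2 hpow.le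
          nlinarith
        · exact Or.inl h
        · rcases eq_or_lt_of_le (show (j':ℤ) + 1 ≤ (j:ℤ) by omega) with h2 | h2
          · exact Or.inr h2.symm
          · exfalso
            have h3 : (j':ℤ) + 2 ≤ (j:ℤ) := by omega
            have := mul_le_mul_of_nonneg_right h3 hpow.le
            nlinarith
      rcases hcase with hje | hje
      · -- same first digit, recurse
        have hj' : j = j' := by exact_mod_cast hje
        have hva : sval N a = sval N b + 1 := by rw [hje] at hv; linarith
        have := ih b hm hda' hdb' hva
        rw [hj', soff_cons, soff_cons, srate_cons]
        rw [← this]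
        ring
      · -- carry case: a = all ones, b = all N's
        rw [hje] at hv
        have hva1 : sval N a = sval N (List.replicate b.length 1) := by
          nlinarith [hba.1, hbb.2, hgap]
        have hvb1 : sval N b = sval N (List.replicate b.length N) := by
          nlinarith [hba.1, hbb.2, hgap]
        have ha1 : a = List.replicate a.length 1 :=
          sval_min_eq N a hda' (by rw [hm]; exact hva1)
        have hbN : b = List.replicate b.length N := sval_max_eq N b hdb' hvb1
        have hj'1 : j = j' + 1 := by exact_mod_cast hje
        have hsoffa : soff P a = 0 := by rw [ha1]; exact soff_replicate_one P _
        have hsoffb : soff P b + srate P b = 1 := by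
          rw [hbN, srate_replicate,
            soff_replicate_top N (le_trans one_le_two hN) P hsum]
          ring
        rw [soff_cons, soff_cons, srate_cons, hsoffa, hj'1]
        rw [← hq j' hjb.1 (by omega)]
        have hme : P j' * soff P b + P j' * srate P b = P j' := by
          rw [← mul_add, hsoffb, mul_one]
        linarith [hme]

lemma psiBW_coord {d : ℕ} (p : Fin d → ℕ → ℝ) (l : List (Fin d → ℕ))
    (x : Fin d → ℝ) (i : Fin d) :
    psiBW p l x i = srate (p i) (l.map (· i)) * x i + soff (p i) (l.map (· i)) := by
  induction l with
  | nil => simp [psiBW]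
  | cons v l ih =>
    show psiB p v (psiBW p l x) i = _
    rw [List.map_cons, srate_cons, soff_cons]
    simp only [psiB]
    rw [ih]
    ring

lemma piB_eq_sval {d : ℕ} (Nv : Fin d → ℕ) (l : List (Fin d → ℕ)) (i : Fin d) :
    piB Nv l i = sval (Nv i) (l.map (· i)) := by
  simp [piB, sval, List.foldl_map]

lemma piB_concat {d : ℕ} (Nv : Fin d → ℕ) (l : List (Fin d → ℕ))
    (v : Fin d → ℕ) (i : Fin d) :
    piB Nv (l ++ [v]) i = (Nv i : ℤ) * piB Nv l i + (v i : ℤ) := by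
  simp [piB, List.foldl_append]

lemma psiBW_continuous {d : ℕ} (p : Fin d → ℕ → ℝ) (l : List (Fin d → ℕ)) :
    Continuous (psiBW p l) := by
  induction l with
  | nil => simpa [psiBW] using continuous_id
  | cons v l ih =>
    show Continuous (psiB p v ∘ psiBW p l)
    refine Continuous.comp ?_ ih
    unfold psiB
    exact continuous_pi fun i =>
      (continuous_const.mul (continuous_apply i)).add continuous_const

lemma P_lt_one (N : ℕ) (hN : 2 ≤ N) (P : ℕ → ℝ)
    (hpos : ∀ j, 1 ≤ j → j ≤ N → 0 < P j)
    (hsum : ∑ j ∈ Finset.Icc 1 N, P j = 1)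
    (j : ℕ) (hj1 : 1 ≤ j) (hjN : j ≤ N) : P j < 1 := by
  set j' : ℕ := if j = 1 then 2 else 1 with hj'
  have hne : j ≠ j' := by
    rcases eq_or_ne j 1 with h | h <;> simp [hj', h] <;> omega
  have hj'1 : 1 ≤ j' := by rcases eq_or_ne j 1 with h | h <;> simp [hj', h]
  have hj'N : j' ≤ N := by rcases eq_or_ne j 1 with h | h <;> simp [hj', h] <;> omega
  have hsub : ({j, j'} : Finset ℕ) ⊆ Finset.Icc 1 N := by
    intro m hm
    simp only [Finset.mem_insert, Finset.mem_singleton] at hm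
    rcases hm with rfl | rfl <;> simp [Finset.mem_Icc] <;> omega
  have hle : P j + P j' ≤ ∑ m ∈ Finset.Icc 1 N, P m := by
    rw [← Finset.sum_pair hne]
    refine Finset.sum_le_sum_of_subset_of_nonneg hsub ?_
    intro m hm _
    rw [Finset.mem_Icc] at hm
    exact (hpos m hm.1 hm.2).le
  have := hpos j' hj'1 hj'N
  linarith [hsum]


end S17

open S17 in
theorem stmt17 (d : ℕ) (Nv : Fin d → ℕ) (p : Fin d → ℕ → ℝ)
    (D : Finset (Fin d → ℕ)) (hB : BSetup d Nv p D)
    (K : Set (Fin d → ℝ)) (hK : IsBAttractor p D K)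
    (k : ℕ) (hk : 1 ≤ k) (w w' : List (Fin d → ℕ))
    (hw : w ∈ BWords D k) (hw' : w' ∈ BWords D k)
    (u u' : Fin d → ℕ) (hu : u ∈ D) (hu' : u' ∈ D)
    (heq : ∀ i, piB Nv (w ++ [u]) i - piB Nv (w' ++ [u']) i =
        piB Nv w i - piB Nv w' i)
    (hne : ∃ i, piB Nv w i ≠ piB Nv w' i)
    (hsmall : ∀ i, |piB Nv w i - piB Nv w' i| ≤ 1) :
    ((psiBW p w '' K) ∩ (psiBW p w' '' K)).Nonempty := by
    classical
  obtain ⟨hd2, hNv, hppos, hpsum, hD, hcard1, hcard2⟩ := hB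
  obtain ⟨⟨z, hz⟩, hKc, hKeq⟩ := hK
  obtain ⟨hwlen, hwmem⟩ := hw
  obtain ⟨hwlen', hwmem'⟩ := hw'
  have hstep : ∀ v ∈ D, ∀ y ∈ K, psiB p v y ∈ K := by
    intro v hv y hy
    rw [hKeq]
    exact Set.mem_iUnion₂.mpr ⟨v, hv, Set.mem_image_of_mem _ hy⟩
  have hxsK : ∀ (v : Fin d → ℕ), v ∈ D → ∀ n, psiBW p (List.replicate n v) z ∈ K := by
    intro v hv n
    induction n with
    | zero => simpa [psiBW] using hz
    | succ n ih =>
      rw [List.replicate_succ]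
      exact hstep v hv _ ih
  set xs : ℕ → (Fin d → ℝ) := fun n => psiBW p (List.replicate n u) z with hxs
  set ys : ℕ → (Fin d → ℝ) := fun n => psiBW p (List.replicate n u') z with hys
  set Pn : ℕ → (Fin d → ℝ) := fun n => psiBW p w (xs n) with hPdef
  set Qn : ℕ → (Fin d → ℝ) := fun n => psiBW p w' (ys n) with hQdef
  have hPn : ∀ n, Pn n ∈ psiBW p w '' K := fun n =>
    Set.mem_image_of_mem _ (hxsK u hu n)
  have hQn : ∀ n, Qn n ∈ psiBW p w' '' K := fun n =>
    Set.mem_image_of_mem _ (hxsK u' hu' n)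
  -- the key coordinatewise limit
  have hdiff : ∀ i, Filter.Tendsto (fun n => Pn n i - Qn n i)
      Filter.atTop (nhds 0) := by
    intro i
    set N := Nv i with hNdef
    set P : ℕ → ℝ := p i with hPidef
    have hN2 : 2 ≤ N := hNv i
    have hpos : ∀ j, 1 ≤ j → j ≤ N → 0 < P j := fun j h1 h2 => hppos i j h1 h2
    have hsum : ∑ j ∈ Finset.Icc 1 N, P j = 1 := hpsum i
    set A : List ℕ := w.map (· i) with hA
    set B : List ℕ := w'.map (· i) with hBd
    have hdA : ∀ j ∈ A, 1 ≤ j ∧ j ≤ N := by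
      intro j hj
      obtain ⟨v, hv, rfl⟩ := List.mem_map.mp hj
      exact hD v (hwmem v hv) i
    have hdB : ∀ j ∈ B, 1 ≤ j ∧ j ≤ N := by
      intro j hj
      obtain ⟨v, hv, rfl⟩ := List.mem_map.mp hj
      exact hD v (hwmem' v hv) i
    have hlen : A.length = B.length := by simp [hA, hBd, hwlen, hwlen']
    have hui := hD u hu i
    have hui' := hD u' hu' i
    -- digit relation
    have hrel : (u' i : ℤ) - (u i : ℤ) =
        ((N : ℤ) - 1) * (sval N A - sval N B) := by
      have h := heq i
      rw [piB_concat, piB_concat] at h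
      rw [piB_eq_sval, piB_eq_sval] at h
      rw [← hA, ← hBd, ← hNdef] at h
      ring_nf
      ring_nf at h
      linarith
    have hsm : |sval N A - sval N B| ≤ 1 := by
      have := hsmall i
      rwa [piB_eq_sval, piB_eq_sval, ← hA, ← hBd, ← hNdef] at this
    have habs : sval N A - sval N B = -1 ∨ sval N A - sval N B = 0 ∨
        sval N A - sval N B = 1 := by
      have h' := abs_le.mp hsm
      omega
    -- coordinate formulas
    have hPni : ∀ n, Pn n i =
        srate P A * ((P (u i)) ^ n * z i + soff P (List.replicate n (u i)))
          + soff P A := by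
      intro n
      have hx : xs n i = (P (u i)) ^ n * z i + soff P (List.replicate n (u i)) := by
        show psiBW p (List.replicate n u) z i = _
        rw [psiBW_coord, List.map_replicate, srate_replicate]
      show psiBW p w (xs n) i = _
      rw [psiBW_coord, hx]
    have hQni : ∀ n, Qn n i =
        srate P B * ((P (u' i)) ^ n * z i + soff P (List.replicate n (u' i)))
          + soff P B := by
      intro n
      have hy : ys n i = (P (u' i)) ^ n * z i + soff P (List.replicate n (u' i)) := by
        show psiBW p (List.replicate n u') z i = _
        rw [psiBW_coord, List.map_replicate, srate_replicate]
      show psiBW p w' (ys n) i = _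
      rw [psiBW_coord, hy]
    have h1lt : P 1 < 1 := P_lt_one N hN2 P hpos hsum 1 le_rfl (by omega)
    have hNlt : P N < 1 := P_lt_one N hN2 P hpos hsum N (by omega) le_rfl
    have h1pos : 0 < P 1 := hpos 1 le_rfl (by omega)
    have hNpos : 0 < P N := hpos N (by omega) le_rfl
    have htend1 : Filter.Tendsto (fun n : ℕ => (P 1) ^ n) Filter.atTop (nhds 0) :=
      tendsto_pow_atTop_nhds_zero_of_lt_one h1pos.le h1lt
    have htendN : Filter.Tendsto (fun n : ℕ => (P N) ^ n) Filter.atTop (nhds 0) :=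
      tendsto_pow_atTop_nhds_zero_of_lt_one hNpos.le hNlt
    rcases habs with ht | ht | ht
    · -- sval A = sval B - 1 : u i = N, u' i = 1
      have hu1 : u i = N ∧ u' i = 1 := by
        rw [ht] at hrel
        constructor <;> omega
      have hadj : soff P A + srate P A = soff P B :=
        adj N hN2 P hpos hsum B A hlen.symm hdB hdA (by omega)
      have hfe : ∀ n, Pn n i - Qn n i =
          (srate P A * (z i - 1)) * (P N) ^ n - (srate P B * z i) * (P 1) ^ n := by
        intro n
        rw [hPni, hQni, hu1.1, hu1.2, soff_replicate_one,
          soff_replicate_top N (by omega) P hsum]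
        linear_combination hadj
      have : Filter.Tendsto
          (fun n => (srate P A * (z i - 1)) * (P N) ^ n
            - (srate P B * z i) * (P 1) ^ n) Filter.atTop (nhds 0) := by
        have := (htendN.const_mul (srate P A * (z i - 1))).sub
          (htend1.const_mul (srate P B * z i))
        simpa using this
      exact this.congr (fun n => (hfe n).symm)
    · -- equal case
      have huu : u i = u' i := by rw [ht] at hrel; omega
      have hAB : A = B := sval_inj N A B hlen hdA hdB (by omega)
      have hfe : ∀ n, Pn n i - Qn n i = 0 := by
        intro n
        rw [hPni, hQni, hAB, huu]
        ring
      simpa [hfe] using tendsto_const_nhds (α := ℝ) (f := Filter.atTop (α := ℕ))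
    · -- sval A = sval B + 1 : u i = 1, u' i = N
      have hu1 : u i = 1 ∧ u' i = N := by
        rw [ht] at hrel
        constructor <;> omega
      have hadj : soff P B + srate P B = soff P A :=
        adj N hN2 P hpos hsum A B hlen hdA hdB (by omega)
      have hfe : ∀ n, Pn n i - Qn n i =
          (srate P A * z i) * (P 1) ^ n - (srate P B * (z i - 1)) * (P N) ^ n := by
        intro n
        rw [hPni, hQni, hu1.1, hu1.2, soff_replicate_one,
          soff_replicate_top N (by omega) P hsum]
        linear_combination -hadj
      have : Filter.Tendsto
          (fun n => (srate P A * z i) * (P 1) ^ n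
            - (srate P B * (z i - 1)) * (P N) ^ n) Filter.atTop (nhds 0) := by
        have := (htend1.const_mul (srate P A * z i)).sub
          (htendN.const_mul (srate P B * (z i - 1)))
        simpa using this
      exact this.congr (fun n => (hfe n).symm)
  -- extract a convergent subsequence
  have hAcomp : IsCompact (psiBW p w '' K) := hKc.image (psiBW_continuous p w)
  have hBcomp : IsCompact (psiBW p w' '' K) := hKc.image (psiBW_continuous p w')
  obtain ⟨L, hLA, φ, hφmono, hφ⟩ := hAcomp.tendsto_subseq hPn
  have hQφ : Filter.Tendsto (Qn ∘ φ) Filter.atTop (nhds L) := by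
    rw [tendsto_pi_nhds] at hφ ⊢
    intro i
    have h1 : Filter.Tendsto (fun n => Pn (φ n) i) Filter.atTop (nhds (L i)) := hφ i
    have h2 : Filter.Tendsto (fun n => Pn (φ n) i - Qn (φ n) i)
        Filter.atTop (nhds 0) := (hdiff i).comp hφmono.tendsto_atTop
    have h3 := h1.sub h2
    simpa using h3
  have hLB : L ∈ psiBW p w' '' K :=
    hBcomp.isClosed.mem_of_tendsto hQφ
      (Filter.Eventually.of_forall fun n => hQn (φ n))
  exact ⟨L, hLA, hLB⟩
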